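/- Let g and h be positive continuously differentiable functions on (0,∞) with g ∈ RV_θ and h ∈ RV_γ, where γ + θ > 1, and let c > 0. Let T > 0 and let v, w : (0,T] → (0,∞) be differentiable functions satisfying v'(t) = −g(c·v(t))·h(v(t)) and w'(t) = −g(w(t))·h(w(t)) for all t ∈ (0,T], with v(t) → ∞ and w(t) → ∞ as t → 0⁺. Then there exists a constant C > 1 such that C⁻¹·v(t) ≤ w(t) ≤ C·v(t) for all t ∈ (0,T]. -/

import Mathlib

open Filter MeasureTheory Set Topology

noncomputable section

/-- continuity on positive compacts gives integrability on `Ioc`. -/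
lemma aux_intOn_Ioc {f : ℝ → ℝ} (hcont : ContinuousOn f (Ioi (0:ℝ)))
    {x : ℝ} (hx : 0 < x) (y : ℝ) : IntegrableOn f (Ioc x y) := by
  rcases le_or_gt x y with hxy | hxy
  · have hsub : Icc x y ⊆ Ioi (0:ℝ) := fun t ht => lt_of_lt_of_le hx ht.1
    exact ((hcont.mono hsub).integrableOn_Icc).mono_set Ioc_subset_Icc_self
  · simp [Ioc_eq_empty (not_lt.mpr hxy.le)]

/-- Dyadic decay gives integrability on `Ioi u0`. -/
lemma aux_intOn_Ioi_of_dyadic {f : ℝ → ℝ} (hcont : ContinuousOn f (Ioi (0:ℝ)))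
    (hpos : ∀ u : ℝ, 0 < u → 0 < f u)
    {r u0 : ℝ} (hr0 : 0 < r) (hr : r < 1/2) (hu0 : 1 ≤ u0)
    (hdy : ∀ u : ℝ, u0 ≤ u → f (2*u) ≤ r * f u) :
    IntegrableOn f (Ioi u0) := by
  have hu0pos : (0:ℝ) < u0 := lt_of_lt_of_le one_pos hu0
  set J : ℝ := ∫ x in u0..(2*u0), f x with hJ
  have hII : ∀ a b : ℝ, 0 < a → 0 < b → IntervalIntegrable f volume a b := by
    intro a b ha hb
    rcases le_or_gt a b with hab | hab
    · exact (intervalIntegrable_iff_integrableOn_Ioc_of_le hab).mpr (aux_intOn_Ioc hcont ha b)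
    · exact ((intervalIntegrable_iff_integrableOn_Ioc_of_le hab.le).mpr
        (aux_intOn_Ioc hcont hb a)).symm
  have hfnn : ∀ x : ℝ, u0 ≤ x → 0 ≤ f x := fun x hx => (hpos x (hu0pos.trans_le hx)).le
  set q : ℝ := 2*r with hq
  have hq1 : q < 1 := by simp [hq]; linarith
  have hq0 : 0 ≤ q := by positivity
  have hpow : ∀ n : ℕ, u0 ≤ 2^n * u0 := by
    intro n
    nlinarith [one_le_pow₀ (a := (2:ℝ)) (n := n) one_le_two, hu0pos]
  have hJ0 : 0 ≤ J := by
    apply intervalIntegral.integral_nonneg (by linarith)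
    intro u hu; exact hfnn u hu.1
  set S : ℕ → ℝ := fun n => ∫ x in u0..(2^n * u0), f x with hS
  have hstep : ∀ n : ℕ, S (n+1) ≤ J + q * S n := by
    intro n
    have hsplit : J + (∫ x in (2*u0)..(2^(n+1)*u0), f x) = S (n+1) := by
      rw [hJ, hS]
      exact intervalIntegral.integral_add_adjacent_intervals
        (hII _ _ hu0pos (by positivity)) (hII _ _ (by positivity) (by positivity))
    have hcomp : IntervalIntegrable (fun x => f (2*x)) volume u0 (2^n * u0) := by
      have := (hII (2*u0) (2^(n+1)*u0) (by positivity) (by positivity)).comp_mul_left (c := 2)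
      have e1 : 2*u0/2 = u0 := by ring
      have e2 : 2^(n+1)*u0/2 = 2^n*u0 := by ring
      rwa [e1, e2] at this
    have hxchg : (∫ x in (2*u0)..(2^(n+1)*u0), f x) = 2 * ∫ x in u0..(2^n * u0), f (2*x) := by
      rw [intervalIntegral.integral_comp_mul_left (f := f) (c := (2:ℝ)) two_ne_zero]
      have e2 : 2*(2^n*u0) = 2^(n+1)*u0 := by ring
      rw [e2, smul_eq_mul]
      ring
    have hmono : (∫ x in u0..(2^n * u0), f (2*x)) ≤ ∫ x in u0..(2^n * u0), r * f x := by
      apply intervalIntegral.integral_mono_on (hpow n) hcomp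
        ((hII u0 (2^n*u0) hu0pos (by positivity)).const_mul r)
      intro x hx
      exact hdy x hx.1
    have : (∫ x in u0..(2^n * u0), r * f x) = r * S n := by
      rw [hS]; exact intervalIntegral.integral_const_mul r f
    have h4 : S (n+1) = J + 2 * ∫ x in u0..(2^n * u0), f (2*x) := by linarith
    have h5 : J + 2*(r * S n) = J + q * S n := by rw [hq]; ring
    linarith
  have hbound : ∀ n : ℕ, S n ≤ J / (1-q) := by
    intro n
    induction n with
    | zero =>
      have : S 0 = 0 := by simp [hS]
      rw [this]
      exact div_nonneg hJ0 (by linarith)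
    | succ n ih =>
      have h1 : S (n+1) ≤ J + q * S n := hstep n
      have h2 : q * S n ≤ q * (J/(1-q)) := by
        apply mul_le_mul_of_nonneg_left ih hq0
      have hne : (1:ℝ) - q ≠ 0 := by linarith
      have h3 : J + q * (J/(1-q)) = J/(1-q) := by
        field_simp
        ring
      linarith
  apply integrableOn_Ioi_of_intervalIntegral_norm_bounded (μ := volume)
    (J/(1-q)) u0 (b := fun i : ℝ => i) (l := atTop)
    (fun i => aux_intOn_Ioc hcont hu0pos i) tendsto_id
  filter_upwards [eventually_ge_atTop u0] with i hi
  have hcg : (∫ x in u0..i, ‖f x‖) = ∫ x in u0..i, f x := by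
    apply intervalIntegral.integral_congr
    intro x hx
    rw [uIcc_of_le hi] at hx
    exact Real.norm_of_nonneg (hfnn x hx.1)
  obtain ⟨n, hn⟩ := pow_unbounded_of_one_lt (i/u0) (one_lt_two (α := ℝ))
  have hin : i ≤ 2^n * u0 := by
    rw [div_lt_iff₀ hu0pos] at hn
    linarith
  have hsplit2 : (∫ x in u0..i, f x) + (∫ x in i..(2^n*u0), f x) = S n :=
    intervalIntegral.integral_add_adjacent_intervals (hII _ _ hu0pos (hu0pos.trans_le hi))
      (hII _ _ (hu0pos.trans_le hi) (by positivity))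
  have htail : 0 ≤ ∫ x in i..(2^n*u0), f x := by
    apply intervalIntegral.integral_nonneg hin
    intro u hu; exact hfnn u (hi.trans hu.1)
  calc (∫ x in u0..i, ‖f x‖) = ∫ x in u0..i, f x := hcg
    _ ≤ S n := by linarith
    _ ≤ J / (1-q) := hbound n


lemma aux_intOn_Ioi {f : ℝ → ℝ} (hcont : ContinuousOn f (Ioi (0:ℝ)))
    {u0 : ℝ} (hInt : IntegrableOn f (Ioi u0)) {x : ℝ} (hx : 0 < x) :
    IntegrableOn f (Ioi x) := by
  have : Ioi x ⊆ Ioc x u0 ∪ Ioi u0 := by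
    intro t ht
    rcases le_or_gt t u0 with h | h
    · exact Or.inl ⟨ht, h⟩
    · exact Or.inr h
  exact ((aux_intOn_Ioc hcont hx u0).union hInt).mono_set this

lemma aux_Phi_anti {f : ℝ → ℝ} (hpos : ∀ u : ℝ, 0 < u → 0 ≤ f u)
    (hInt : ∀ x : ℝ, 0 < x → IntegrableOn f (Ioi x))
    {x y : ℝ} (hx : 0 < x) (hxy : x ≤ y) :
    (∫ u in Ioi y, f u) ≤ ∫ u in Ioi x, f u := by
  apply setIntegral_mono_set (hInt x hx)
  · filter_upwards [ae_restrict_mem measurableSet_Ioi] with u hu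
    exact hpos u (hx.trans hu)
  · exact HasSubset.Subset.eventuallyLE (Ioi_subset_Ioi hxy)

lemma aux_Phi_nonneg {f : ℝ → ℝ} (hpos : ∀ u : ℝ, 0 < u → 0 ≤ f u)
    {x : ℝ} (hx : 0 < x) : 0 ≤ ∫ u in Ioi x, f u := by
  apply setIntegral_nonneg measurableSet_Ioi
  intro u hu; exact hpos u (hx.trans hu)

lemma aux_Phi_split {f : ℝ → ℝ} (hcont : ContinuousOn f (Ioi (0:ℝ)))
    (hInt : ∀ x : ℝ, 0 < x → IntegrableOn f (Ioi x))
    {x y : ℝ} (hx : 0 < x) (hxy : x ≤ y) :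
    (∫ u in Ioi x, f u) = (∫ u in x..y, f u) + ∫ u in Ioi y, f u := by
  have hy : 0 < y := hx.trans_le hxy
  rw [intervalIntegral.integral_of_le hxy, ← setIntegral_union
    (Ioc_disjoint_Ioi le_rfl) measurableSet_Ioi (aux_intOn_Ioc hcont hx y) (hInt y hy),
    Ioc_union_Ioi_eq_Ioi hxy]

lemma aux_Phi_deriv {f : ℝ → ℝ} (hcont : ContinuousOn f (Ioi (0:ℝ)))
    (hInt : ∀ x : ℝ, 0 < x → IntegrableOn f (Ioi x))
    {x : ℝ} (hx : 0 < x) :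
    HasDerivAt (fun y => ∫ u in Ioi y, f u) (-(f x)) x := by
  set a : ℝ := x/2 with ha
  have hax : a < x := by rw [ha]; linarith
  have ha0 : 0 < a := by rw [ha]; linarith
  have hF : HasDerivAt (fun y => ∫ t in a..y, f t) (f x) x := by
    apply intervalIntegral.integral_hasDerivAt_right
    · exact (intervalIntegrable_iff_integrableOn_Ioc_of_le hax.le).mpr
        (aux_intOn_Ioc hcont ha0 x)
    · exact ContinuousAt.stronglyMeasurableAtFilter isOpen_Ioi
        (fun y hy => hcont.continuousAt (Ioi_mem_nhds hy)) x hx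
    · exact hcont.continuousAt (Ioi_mem_nhds hx)
  have heq : (fun y => ∫ u in Ioi y, f u) =ᶠ[𝓝 x]
      (fun y => (∫ u in Ioi a, f u) - ∫ t in a..y, f t) := by
    filter_upwards [Ioi_mem_nhds hax] with y hy
    have := aux_Phi_split hcont hInt ha0 (le_of_lt hy)
    linarith
  have : HasDerivAt (fun y => (∫ u in Ioi a, f u) - ∫ t in a..y, f t) (-(f x)) x := by
    have h := (hasDerivAt_const x (∫ u in Ioi a, f u)).sub hF
    rw [zero_sub] at h
    exact h
  exact HasDerivAt.congr_of_eventuallyEq this heq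

lemma aux_Phi_tendsto {f : ℝ → ℝ} (hcont : ContinuousOn f (Ioi (0:ℝ)))
    {u0 : ℝ} (hu0 : 0 < u0) (hInt : IntegrableOn f (Ioi u0)) :
    Tendsto (fun x => ∫ u in Ioi x, f u) atTop (𝓝 0) := by
  have hInt' : ∀ x : ℝ, 0 < x → IntegrableOn f (Ioi x) :=
    fun x hx => aux_intOn_Ioi hcont hInt hx
  have h1 : Tendsto (fun x : ℝ => ∫ t in u0..x, f t) atTop (𝓝 (∫ u in Ioi u0, f u)) :=
    intervalIntegral_tendsto_integral_Ioi u0 hInt tendsto_id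
  have h2 : Tendsto (fun x : ℝ => (∫ u in Ioi u0, f u) - ∫ t in u0..x, f t) atTop
      (𝓝 ((∫ u in Ioi u0, f u) - ∫ u in Ioi u0, f u)) :=
    tendsto_const_nhds.sub h1
  rw [sub_self] at h2
  apply h2.congr'
  filter_upwards [eventually_ge_atTop u0] with x hxu
  have := aux_Phi_split hcont hInt' hu0 hxu
  linarith

lemma aux_Phi_double {f : ℝ → ℝ} (hcont : ContinuousOn f (Ioi (0:ℝ)))
    (hInt : ∀ x : ℝ, 0 < x → IntegrableOn f (Ioi x))
    {r u0 : ℝ} (hr0 : 0 < r) (hu0 : 1 ≤ u0)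
    (hdy : ∀ u : ℝ, u0 ≤ u → f (2*u) ≤ r * f u)
    {x : ℝ} (hx : u0 ≤ x) :
    (∫ u in Ioi (2*x), f u) ≤ (2*r) * ∫ u in Ioi x, f u := by
  have hx0 : 0 < x := lt_of_lt_of_le one_pos (hu0.trans hx)
  have hchg : (∫ u in Ioi x, f (2*u)) = (2:ℝ)⁻¹ • ∫ u in Ioi (2*x), f u :=
    integral_comp_mul_left_Ioi f x two_pos
  have hint2 : IntegrableOn (fun u => f (2*u)) (Ioi x) :=
    (integrableOn_Ioi_comp_mul_left_iff f x two_pos).mpr (hInt (2*x) (by positivity))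
  have hmono : (∫ u in Ioi x, f (2*u)) ≤ ∫ u in Ioi x, r * f u := by
    apply setIntegral_mono_on hint2 ((hInt x hx0).const_mul r) measurableSet_Ioi
    intro u hu
    exact hdy u (hx.trans (le_of_lt hu))
  rw [MeasureTheory.integral_const_mul] at hmono
  rw [smul_eq_mul] at hchg
  linarith

lemma aux_Phi_pow {f : ℝ → ℝ} (hcont : ContinuousOn f (Ioi (0:ℝ)))
    (hInt : ∀ x : ℝ, 0 < x → IntegrableOn f (Ioi x))
    {r u0 : ℝ} (hr0 : 0 < r) (hu0 : 1 ≤ u0)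
    (hdy : ∀ u : ℝ, u0 ≤ u → f (2*u) ≤ r * f u)
    {x : ℝ} (hx : u0 ≤ x) (k : ℕ) :
    (∫ u in Ioi (2^k*x), f u) ≤ (2*r)^k * ∫ u in Ioi x, f u := by
  induction k with
  | zero => simp
  | succ k ih =>
    have hx0 : 0 < x := lt_of_lt_of_le one_pos (hu0.trans hx)
    have h2kx : u0 ≤ 2^k * x := by nlinarith [one_le_pow₀ (a := (2:ℝ)) (n := k) one_le_two]
    have h1 := aux_Phi_double hcont hInt hr0 hu0 hdy h2kx
    have he : 2*(2^k*x) = 2^(k+1)*x := by ring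
    rw [he] at h1
    calc (∫ u in Ioi (2^(k+1)*x), f u) ≤ (2*r) * ∫ u in Ioi (2^k*x), f u := h1
      _ ≤ (2*r) * ((2*r)^k * ∫ u in Ioi x, f u) := by
          apply mul_le_mul_of_nonneg_left ih (by positivity)
      _ = (2*r)^(k+1) * ∫ u in Ioi x, f u := by ring

lemma aux_ode {f : ℝ → ℝ} (hcont : ContinuousOn f (Ioi (0:ℝ)))
    (hpos : ∀ u : ℝ, 0 < u → 0 < f u)
    (hInt : ∀ x : ℝ, 0 < x → IntegrableOn f (Ioi x))
    (htend : Tendsto (fun x => ∫ s in Ioi x, f s) atTop (𝓝 0))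
    {T : ℝ} (hT : 0 < T) {u : ℝ → ℝ}
    (hupos : ∀ t ∈ Ioc (0:ℝ) T, 0 < u t)
    (hu : ∀ t ∈ Ioc (0:ℝ) T, HasDerivAt u (-(f (u t))⁻¹) t)
    (hu0 : Tendsto u (𝓝[>] (0:ℝ)) atTop) :
    ∀ t ∈ Ioc (0:ℝ) T, (∫ s in Ioi (u t), f s) = t := by
  intro t ht
  set Φ : ℝ → ℝ := fun x => ∫ s in Ioi x, f s with hΦ
  set H : ℝ → ℝ := fun τ => Φ (u τ) - τ with hH
  have hHd : ∀ τ ∈ Ioc (0:ℝ) T, HasDerivAt H 0 τ := by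
    intro τ hτ
    have h1 : HasDerivAt Φ (-(f (u τ))) (u τ) :=
      aux_Phi_deriv hcont hInt (hupos τ hτ)
    have h2 := (h1.comp τ (hu τ hτ)).sub (hasDerivAt_id τ)
    have he : -f (u τ) * -(f (u τ))⁻¹ - 1 = 0 := by
      rw [neg_mul_neg, mul_inv_cancel₀ (ne_of_gt (hpos _ (hupos τ hτ)))]
      ring
    rwa [he] at h2
  -- H is constant on Ioc 0 T
  have hconst : ∀ s ∈ Ioc (0:ℝ) t, H t = H s := by
    intro s hs
    have hsub : Icc s t ⊆ Ioc (0:ℝ) T := fun τ hτ =>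
      ⟨hs.1.trans_le hτ.1, hτ.2.trans ht.2⟩
    have hcc : ContinuousOn H (Icc s t) := fun τ hτ =>
      ((hHd τ (hsub hτ)).continuousAt).continuousWithinAt
    have hdd : ∀ τ ∈ Ico s t, HasDerivWithinAt H 0 (Ici τ) τ := fun τ hτ =>
      (hHd τ (hsub ⟨hτ.1, hτ.2.le⟩)).hasDerivWithinAt
    exact (constant_of_has_deriv_right_zero hcc hdd t (right_mem_Icc.mpr hs.2)).symm ▸
      (constant_of_has_deriv_right_zero hcc hdd t (right_mem_Icc.mpr hs.2))
  -- take the limit s → 0⁺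
  have hlim1 : Tendsto (fun s => H s) (𝓝[>] (0:ℝ)) (𝓝 0) := by
    have hA : Tendsto (fun s => Φ (u s)) (𝓝[>] (0:ℝ)) (𝓝 0) := htend.comp hu0
    have hB : Tendsto (fun s : ℝ => s) (𝓝[>] (0:ℝ)) (𝓝 0) :=
      tendsto_id.mono_left nhdsWithin_le_nhds
    simpa using hA.sub hB
  have hlim2 : Tendsto (fun _ : ℝ => H t) (𝓝[>] (0:ℝ)) (𝓝 (H t)) := tendsto_const_nhds
  have heq : (fun _ : ℝ => H t) =ᶠ[𝓝[>] (0:ℝ)] fun s => H s := by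
    filter_upwards [Ioo_mem_nhdsGT_of_mem (left_mem_Ico.mpr ht.1)] with s hs
    exact hconst s ⟨hs.1, hs.2.le⟩
  have : Tendsto (fun _ : ℝ => H t) (𝓝[>] (0:ℝ)) (𝓝 0) := hlim1.congr' heq.symm
  have hH0 : H t = 0 := tendsto_nhds_unique hlim2 this
  have : Φ (u t) - t = 0 := hH0
  linarith [this]

/-- `f` is regularly varying at infinity of index `ρ`. -/
def IsRV (f : ℝ → ℝ) (ρ : ℝ) : Prop :=
  ∀ ξ : ℝ, 0 < ξ → Tendsto (fun u => f (ξ * u) / f u) atTop (𝓝 (ξ ^ ρ))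

/-- Let `g, h` be positive `C¹` functions on `(0,∞)` with `g ∈ RV_θ`, `h ∈ RV_γ`,
`γ + θ > 1`, and let `c > 0`. If `v, w` solve `v' = -g(c v) h(v)`, `w' = -g(w) h(w)`
on `(0,T]` with `v, w → ∞` as `t → 0⁺`, then there is `C > 1` with
`C⁻¹ v(t) ≤ w(t) ≤ C v(t)` on `(0,T]`. -/
theorem blowup_ode_two_sided_comparison (θ γ c : ℝ) (hγθ : 1 < γ + θ) (hc : 0 < c)
    (g h : ℝ → ℝ)
    (hgC : ContDiffOn ℝ 1 g (Ioi (0:ℝ))) (hhC : ContDiffOn ℝ 1 h (Ioi (0:ℝ)))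
    (hgpos : ∀ u : ℝ, 0 < u → 0 < g u) (hhpos : ∀ u : ℝ, 0 < u → 0 < h u)
    (hgRV : IsRV g θ) (hhRV : IsRV h γ)
    (T : ℝ) (hT : 0 < T) (v w : ℝ → ℝ)
    (hvpos : ∀ t ∈ Ioc (0:ℝ) T, 0 < v t) (hwpos : ∀ t ∈ Ioc (0:ℝ) T, 0 < w t)
    (hv : ∀ t ∈ Ioc (0:ℝ) T, HasDerivAt v (-(g (c * v t) * h (v t))) t)
    (hw : ∀ t ∈ Ioc (0:ℝ) T, HasDerivAt w (-(g (w t) * h (w t))) t)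
    (hv0 : Tendsto v (𝓝[>] (0:ℝ)) atTop) (hw0 : Tendsto w (𝓝[>] (0:ℝ)) atTop) :
    ∃ C : ℝ, 1 < C ∧ ∀ t ∈ Ioc (0:ℝ) T, C⁻¹ * v t ≤ w t ∧ w t ≤ C * v t := by
  classical
  set f : ℝ → ℝ := fun u => (g u * h u)⁻¹ with hf
  set ft : ℝ → ℝ := fun u => (g (c*u) * h u)⁻¹ with hft
  -- basic continuity and positivity facts
  have hgcont : ContinuousOn g (Ioi (0:ℝ)) := hgC.continuousOn
  have hhcont : ContinuousOn h (Ioi (0:ℝ)) := hhC.continuousOn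
  have hfcont : ContinuousOn f (Ioi (0:ℝ)) :=
    (hgcont.mul hhcont).inv₀ fun x hx => (mul_pos (hgpos x hx) (hhpos x hx)).ne'
  have hgccont : ContinuousOn (fun u => g (c*u)) (Ioi (0:ℝ)) := by
    apply hgcont.comp (continuous_const.mul continuous_id).continuousOn
    intro x hx
    exact mul_pos hc hx
  have hftcont : ContinuousOn ft (Ioi (0:ℝ)) :=
    (hgccont.mul hhcont).inv₀ fun x hx => (mul_pos (hgpos _ (mul_pos hc hx)) (hhpos x hx)).ne'
  have hfpos : ∀ u : ℝ, 0 < u → 0 < f u := fun u hu =>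
    inv_pos.mpr (mul_pos (hgpos u hu) (hhpos u hu))
  have hftpos : ∀ u : ℝ, 0 < u → 0 < ft u := fun u hu =>
    inv_pos.mpr (mul_pos (hgpos _ (mul_pos hc hu)) (hhpos u hu))
  have hfnn : ∀ u : ℝ, 0 < u → 0 ≤ f u := fun u hu => (hfpos u hu).le
  -- the RV limits
  have h2θ : (0:ℝ) < (2:ℝ)^θ := Real.rpow_pos_of_pos two_pos θ
  have h2γ : (0:ℝ) < (2:ℝ)^γ := Real.rpow_pos_of_pos two_pos γ
  have hcθ : (0:ℝ) < c^θ := Real.rpow_pos_of_pos hc θ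
  set L : ℝ := ((2:ℝ)^θ * (2:ℝ)^γ)⁻¹ with hLdef
  have hL0 : 0 < L := inv_pos.mpr (mul_pos h2θ h2γ)
  have hLhalf : L < 1/2 := by
    have h2 : (2:ℝ) < (2:ℝ)^θ * (2:ℝ)^γ := by
      have : (2:ℝ)^(1:ℝ) < (2:ℝ)^(θ+γ) := by
        rw [Real.rpow_lt_rpow_left_iff one_lt_two]
        linarith
      rw [Real.rpow_one, Real.rpow_add two_pos] at this
      exact this
    have := inv_strictAnti₀ two_pos h2
    rw [hLdef]
    linarith [this]
  have hL1 : Tendsto (fun u => f (2*u) / f u) atTop (𝓝 L) := by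
    have A := ((hgRV 2 two_pos).mul (hhRV 2 two_pos)).inv₀ (mul_pos h2θ h2γ).ne'
    apply A.congr'
    filter_upwards [eventually_gt_atTop (0:ℝ)] with u hu
    have h2u : (0:ℝ) < 2*u := by linarith
    have e1 := (hgpos u hu).ne'
    have e2 := (hhpos u hu).ne'
    have e3 := (hgpos _ h2u).ne'
    have e4 := (hhpos _ h2u).ne'
    simp only [hf]
    field_simp
  have hL2 : Tendsto (fun u => ft u / f u) atTop (𝓝 ((c^θ)⁻¹)) := by
    have A := (hgRV c hc).inv₀ hcθ.ne'
    apply A.congr'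
    filter_upwards [eventually_gt_atTop (0:ℝ)] with u hu
    have hcu : (0:ℝ) < c*u := mul_pos hc hu
    have e1 := (hgpos u hu).ne'
    have e2 := (hhpos u hu).ne'
    have e3 := (hgpos _ hcu).ne'
    simp only [hf, hft]
    field_simp
  -- constants
  set r : ℝ := (L + 1/2)/2 with hrdef
  have hr0 : 0 < r := by rw [hrdef]; linarith
  have hrhalf : r < 1/2 := by rw [hrdef]; linarith
  have hLr : L < r := by rw [hrdef]; linarith
  set a : ℝ := (c^θ)⁻¹/2 with hadef
  set b : ℝ := 2*(c^θ)⁻¹ with hbdef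
  have ha0 : 0 < a := by rw [hadef]; positivity
  have hb0 : 0 < b := by rw [hbdef]; positivity
  -- thresholds
  have hev1 : ∀ᶠ u in atTop, f (2*u) ≤ r * f u := by
    filter_upwards [hL1.eventually_lt_const hLr, eventually_gt_atTop (0:ℝ)] with u h1 h2
    have := hfpos u h2
    rw [div_lt_iff₀ this] at h1
    linarith
  have hev2 : ∀ᶠ u in atTop, a * f u ≤ ft u ∧ ft u ≤ b * f u := by
    have hx0 : (0:ℝ) < (c^θ)⁻¹ := inv_pos.mpr hcθ
    have haa : a < (c^θ)⁻¹ := by rw [hadef]; linarith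
    have hbb : (c^θ)⁻¹ < b := by rw [hbdef]; linarith
    filter_upwards [hL2.eventually_const_lt haa, hL2.eventually_lt_const hbb,
      eventually_gt_atTop (0:ℝ)] with u h1 h2 h3
    have hfu := hfpos u h3
    constructor
    · rw [lt_div_iff₀ hfu] at h1
      linarith
    · rw [div_lt_iff₀ hfu] at h2
      linarith
  -- a single threshold
  obtain ⟨N, hN⟩ := (hev1.and hev2).exists_forall_of_atTop
  set u0 : ℝ := max N 1 with hu0def
  have hu0ge1 : (1:ℝ) ≤ u0 := le_max_right N 1
  have hu0pos : (0:ℝ) < u0 := lt_of_lt_of_le one_pos hu0ge1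
  have hdy : ∀ u : ℝ, u0 ≤ u → f (2*u) ≤ r * f u :=
    fun u hu => (hN u ((le_max_left N 1).trans hu)).1
  have hcomp_ab : ∀ u : ℝ, u0 ≤ u → a * f u ≤ ft u ∧ ft u ≤ b * f u :=
    fun u hu => (hN u ((le_max_left N 1).trans hu)).2
  -- integrability
  have hIntf0 : IntegrableOn f (Ioi u0) :=
    aux_intOn_Ioi_of_dyadic hfcont hfpos hr0 hrhalf hu0ge1 hdy
  have hIntf : ∀ x : ℝ, 0 < x → IntegrableOn f (Ioi x) :=
    fun x hx => aux_intOn_Ioi hfcont hIntf0 hx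
  have hIntft0 : IntegrableOn ft (Ioi u0) := by
    apply Integrable.mono' ((hIntf u0 hu0pos).const_mul b)
      ((hftcont.mono fun x hx => hu0pos.trans hx).aestronglyMeasurable measurableSet_Ioi)
    filter_upwards [ae_restrict_mem measurableSet_Ioi] with u hu
    rw [Real.norm_of_nonneg (hftpos u (hu0pos.trans hu)).le]
    exact (hcomp_ab u (le_of_lt hu)).2
  have hIntft : ∀ x : ℝ, 0 < x → IntegrableOn ft (Ioi x) :=
    fun x hx => aux_intOn_Ioi hftcont hIntft0 hx
  -- comparison of the tail integrals
  have hPsiPhi : ∀ x : ℝ, u0 ≤ x →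
      a * (∫ u in Ioi x, f u) ≤ (∫ u in Ioi x, ft u) ∧
      (∫ u in Ioi x, ft u) ≤ b * ∫ u in Ioi x, f u := by
    intro x hx
    have hx0 : 0 < x := hu0pos.trans_le hx
    constructor
    · rw [← MeasureTheory.integral_const_mul]
      apply setIntegral_mono_on ((hIntf x hx0).const_mul a) (hIntft x hx0) measurableSet_Ioi
      intro u hu
      exact (hcomp_ab u (hx.trans hu.le)).1
    · rw [← MeasureTheory.integral_const_mul]
      apply setIntegral_mono_on (hIntft x hx0) ((hIntf x hx0).const_mul b) measurableSet_Ioi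
      intro u hu
      exact (hcomp_ab u (hx.trans hu.le)).2
  -- tendsto of tails
  have htf : Tendsto (fun x => ∫ u in Ioi x, f u) atTop (𝓝 0) :=
    aux_Phi_tendsto hfcont hu0pos hIntf0
  have htft : Tendsto (fun x => ∫ u in Ioi x, ft u) atTop (𝓝 0) := by
    have hb' : Tendsto (fun x => b * ∫ u in Ioi x, f u) atTop (𝓝 0) := by
      simpa using htf.const_mul b
    apply tendsto_of_tendsto_of_tendsto_of_le_of_le' (tendsto_const_nhds (α := ℝ) (f := atTop)) hb'
    · filter_upwards [eventually_gt_atTop (0:ℝ)] with x hx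
      exact aux_Phi_nonneg (fun u hu => (hftpos u hu).le) hx
    · filter_upwards [eventually_ge_atTop u0] with x hx
      exact (hPsiPhi x hx).2
  -- the solutions are given by inverting the tail integrals
  have hw' : ∀ t ∈ Ioc (0:ℝ) T, HasDerivAt w (-(f (w t))⁻¹) t := by
    intro t ht
    have := hw t ht
    rwa [show -(g (w t) * h (w t)) = -(f (w t))⁻¹ by rw [hf]; simp] at this
  have hv' : ∀ t ∈ Ioc (0:ℝ) T, HasDerivAt v (-(ft (v t))⁻¹) t := by
    intro t ht
    have := hv t ht
    rwa [show -(g (c * v t) * h (v t)) = -(ft (v t))⁻¹ by rw [hft]; simp] at this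
  have hPhiW : ∀ t ∈ Ioc (0:ℝ) T, (∫ s in Ioi (w t), f s) = t :=
    aux_ode hfcont hfpos hIntf htf hT hwpos hw' hw0
  have hPsiV : ∀ t ∈ Ioc (0:ℝ) T, (∫ s in Ioi (v t), ft s) = t :=
    aux_ode hftcont hftpos hIntft htft hT hvpos hv' hv0
  -- choose k
  set q : ℝ := 2*r with hqdef
  have hq0 : 0 < q := by rw [hqdef]; linarith
  have hq1 : q < 1 := by rw [hqdef]; linarith
  obtain ⟨k, hk⟩ := exists_pow_lt_of_lt_one (lt_min ha0 (inv_pos.mpr hb0)) hq1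
  have hka : q^k < a := lt_of_lt_of_le hk (min_le_left _ _)
  have hkb : q^k < b⁻¹ := lt_of_lt_of_le hk (min_le_right _ _)
  set K : ℝ := (2:ℝ)^k with hKdef
  have hK1 : (1:ℝ) ≤ K := one_le_pow₀ one_le_two
  have hK0 : (0:ℝ) < K := lt_of_lt_of_le one_pos hK1
  -- the small-time two-sided bound
  have hsmall : ∀ t ∈ Ioc (0:ℝ) T, u0 ≤ v t → u0 ≤ w t →
      w t ≤ K * v t ∧ v t ≤ K * w t := by
    intro t ht hvt hwt
    have hvt0 : 0 < v t := hu0pos.trans_le hvt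
    have hwt0 : 0 < w t := hu0pos.trans_le hwt
    have ht0 : 0 < t := ht.1
    constructor
    · by_contra hcon
      push_neg at hcon
      have h1 : (∫ s in Ioi (w t), f s) ≤ ∫ s in Ioi (K * v t), f s :=
        aux_Phi_anti hfnn hIntf (by positivity) hcon.le
      have h2 : (∫ s in Ioi (K * v t), f s) ≤ q^k * ∫ s in Ioi (v t), f s := by
        rw [hKdef, hqdef]
        exact aux_Phi_pow hfcont hIntf hr0 hu0ge1 hdy hvt k
      have h3 : a * (∫ s in Ioi (v t), f s) ≤ t := by
        have h3' := (hPsiPhi (v t) hvt).1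
        rwa [hPsiV t ht] at h3'
      have h4 : (∫ s in Ioi (v t), f s) ≤ a⁻¹ * t := by
        rw [← le_div_iff₀' ha0] at h3
        simpa [div_eq_inv_mul] using h3
      have h5 : t ≤ q^k * (a⁻¹ * t) := by
        have h5' : (∫ s in Ioi (w t), f s) ≤ q^k * (a⁻¹ * t) :=
          calc (∫ s in Ioi (w t), f s) ≤ ∫ s in Ioi (K * v t), f s := h1
            _ ≤ q^k * ∫ s in Ioi (v t), f s := h2
            _ ≤ q^k * (a⁻¹ * t) := by
                apply mul_le_mul_of_nonneg_left h4 (by positivity)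
        rwa [hPhiW t ht] at h5'
      have hqa : q^k * a⁻¹ < 1 := by
        rw [← lt_div_iff₀ (inv_pos.mpr ha0)]
        simpa [div_eq_mul_inv] using hka
      rw [← mul_assoc] at h5
      have h6 : q^k * a⁻¹ * t < 1 * t := mul_lt_mul_of_pos_right hqa ht0
      rw [one_mul] at h6
      linarith
    · by_contra hcon
      push_neg at hcon
      have hvtK : u0 ≤ v t := hvt
      have h1 : (∫ s in Ioi (v t), ft s) ≤ b * ∫ s in Ioi (v t), f s :=
        (hPsiPhi (v t) hvt).2
      have h2 : (∫ s in Ioi (v t), f s) ≤ ∫ s in Ioi (K * w t), f s :=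
        aux_Phi_anti hfnn hIntf (by positivity) hcon.le
      have h3 : (∫ s in Ioi (K * w t), f s) ≤ q^k * ∫ s in Ioi (w t), f s := by
        rw [hKdef, hqdef]
        exact aux_Phi_pow hfcont hIntf hr0 hu0ge1 hdy hwt k
      have h5 : t ≤ b * (q^k * t) := by
        have h5' : (∫ s in Ioi (v t), ft s) ≤ b * (q^k * t) :=
          calc (∫ s in Ioi (v t), ft s) ≤ b * ∫ s in Ioi (v t), f s := h1
            _ ≤ b * ∫ s in Ioi (K * w t), f s := by
                apply mul_le_mul_of_nonneg_left h2 hb0.le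
            _ ≤ b * (q^k * ∫ s in Ioi (w t), f s) := by
                apply mul_le_mul_of_nonneg_left h3 hb0.le
            _ = b * (q^k * t) := by rw [hPhiW t ht]
        rwa [hPsiV t ht] at h5'
      have hqb : b * q^k < 1 := by
        have := (mul_lt_mul_iff_right₀ hb0).mpr hkb
        rwa [mul_inv_cancel₀ hb0.ne'] at this
      rw [← mul_assoc] at h5
      have h6 : b * q^k * t < 1 * t := mul_lt_mul_of_pos_right hqb ht0
      rw [one_mul] at h6
      linarith
  -- a neighborhood of 0 where v, w are large
  have hlarge : ∀ᶠ t in 𝓝[>] (0:ℝ), u0 ≤ v t ∧ u0 ≤ w t :=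
    (hv0.eventually (eventually_ge_atTop u0)).and (hw0.eventually (eventually_ge_atTop u0))
  obtain ⟨t1, ht1pos, ht1⟩ := mem_nhdsGT_iff_exists_Ioo_subset.mp hlarge
  set t2 : ℝ := min t1 T with ht2def
  have ht20 : 0 < t2 := lt_min ht1pos hT
  have ht2T : t2 ≤ T := min_le_right _ _
  have hsubIcc : Icc t2 T ⊆ Ioc (0:ℝ) T := fun τ hτ => ⟨ht20.trans_le hτ.1, hτ.2⟩
  have hvc : ContinuousOn v (Icc t2 T) := fun τ hτ =>
    ((hv τ (hsubIcc hτ)).continuousAt).continuousWithinAt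
  have hwc : ContinuousOn w (Icc t2 T) := fun τ hτ =>
    ((hw τ (hsubIcc hτ)).continuousAt).continuousWithinAt
  have hnemp : (Icc t2 T).Nonempty := ⟨t2, le_refl _, ht2T⟩
  obtain ⟨tw, htw, hwmax⟩ := isCompact_Icc.exists_isMaxOn hnemp hwc
  obtain ⟨tv, htv, hvmin⟩ := isCompact_Icc.exists_isMinOn hnemp hvc
  obtain ⟨tv2, htv2, hvmax⟩ := isCompact_Icc.exists_isMaxOn hnemp hvc
  obtain ⟨tw2, htw2, hwmin⟩ := isCompact_Icc.exists_isMinOn hnemp hwc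
  have hmv : 0 < v tv := hvpos tv (hsubIcc htv)
  have hmw : 0 < w tw2 := hwpos tw2 (hsubIcc htw2)
  set C1 : ℝ := w tw / v tv with hC1def
  set C2 : ℝ := v tv2 / w tw2 with hC2def
  have hC1nn : 0 ≤ C1 := div_nonneg (hwpos tw (hsubIcc htw)).le hmv.le
  have hC2nn : 0 ≤ C2 := div_nonneg (hvpos tv2 (hsubIcc htv2)).le hmw.le
  set C : ℝ := max (max K C1) (max C2 1) + 1 with hCdef
  have hCK : K ≤ C := by
    have := le_max_left K C1
    have := le_max_left (max K C1) (max C2 1)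
    rw [hCdef]; linarith
  have hC1le : C1 ≤ C := by
    have := le_max_right K C1
    have := le_max_left (max K C1) (max C2 1)
    rw [hCdef]; linarith
  have hC2le : C2 ≤ C := by
    have := le_max_left C2 1
    have := le_max_right (max K C1) (max C2 1)
    rw [hCdef]; linarith
  have hCgt1 : 1 < C := by
    have h1 := le_max_right C2 1
    have h2 := le_max_right (max K C1) (max C2 1)
    rw [hCdef]; linarith
  have hC0 : (0:ℝ) < C := lt_trans one_pos hCgt1
  refine ⟨C, hCgt1, ?_⟩
  intro t ht
  have hvt0 := hvpos t ht
  have hwt0 := hwpos t ht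
  rcases lt_or_ge t t2 with hlt | hge
  · have hmem : t ∈ Ioo (0:ℝ) t1 := ⟨ht.1, hlt.trans_le (min_le_left _ _)⟩
    obtain ⟨hvl, hwl⟩ := ht1 hmem
    obtain ⟨hcl1, hcl2⟩ := hsmall t ht hvl hwl
    constructor
    · rw [inv_mul_le_iff₀ hC0]
      calc v t ≤ K * w t := hcl2
        _ ≤ C * w t := mul_le_mul_of_nonneg_right hCK hwt0.le
    · calc w t ≤ K * v t := hcl1
        _ ≤ C * v t := mul_le_mul_of_nonneg_right hCK hvt0.le
  · have hmem2 : t ∈ Icc t2 T := ⟨hge, ht.2⟩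
    constructor
    · rw [inv_mul_le_iff₀ hC0]
      calc v t ≤ v tv2 := isMaxOn_iff.mp hvmax t hmem2
        _ = C2 * w tw2 := by rw [hC2def, div_mul_cancel₀ _ hmw.ne']
        _ ≤ C2 * w t := mul_le_mul_of_nonneg_left (isMinOn_iff.mp hwmin t hmem2) hC2nn
        _ ≤ C * w t := mul_le_mul_of_nonneg_right hC2le hwt0.le
    · calc w t ≤ w tw := isMaxOn_iff.mp hwmax t hmem2
        _ = C1 * v tv := by rw [hC1def, div_mul_cancel₀ _ hmv.ne']
        _ ≤ C1 * v t := mul_le_mul_of_nonneg_left (isMinOn_iff.mp hvmin t hmem2) hC1nn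
        _ ≤ C * v t := mul_le_mul_of_nonneg_right hC1le hvt0.le
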